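/- Let B be a right double extension of A with data (P, σ, δ, τ), and suppose there is a k-algebra homomorphism ε : A → k with kernel m such that σᵢⱼ(m) ⊆ m for all i, j ∈ {1,2}, δᵢ(m) ⊆ m for i = 1, 2, and τ₁, τ₂, τ₀ ∈ m. If B is left noetherian or right noetherian, then p₁₂ ≠ 0. (The key point is that k⟨Y₁, Y₂⟩/((Y₂ − p₁₁Y₁)Y₁) is neither left nor right noetherian.) -/
import Mathlib

structure RightDoubleExtension (k : Type*) [Field k] {B : Type*} [Ring B] [Algebra k B]
    (A : Subalgebra k B) where
  y₁ : B
  y₂ : B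
  σ₁₁ : A →ₗ[k] A
  σ₁₂ : A →ₗ[k] A
  σ₂₁ : A →ₗ[k] A
  σ₂₂ : A →ₗ[k] A
  δ₁ : A →ₗ[k] A
  δ₂ : A →ₗ[k] A
  p₁₂ : k
  p₁₁ : k
  τ₁ : A
  τ₂ : A
  τ₀ : A
  R1 : y₂ * y₁ = p₁₂ • (y₁ * y₂) + p₁₁ • (y₁ * y₁)
      + (τ₁ : B) * y₁ + (τ₂ : B) * y₂ + (τ₀ : B)
  R2₁ : ∀ r : A, y₁ * (r : B) = (σ₁₁ r : B) * y₁ + (σ₁₂ r : B) * y₂ + (δ₁ r : B)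
  R2₂ : ∀ r : A, y₂ * (r : B) = (σ₂₁ r : B) * y₁ + (σ₂₂ r : B) * y₂ + (δ₂ r : B)
  basis : ∀ b : B, ∃! f : ℕ × ℕ →₀ A,
      b = f.sum fun n a => (a : B) * (y₁ ^ n.1 * y₂ ^ n.2)

namespace RightDoubleExtension

variable {k : Type*} [Field k] {B : Type*} [Ring B] [Algebra k B]
    {A : Subalgebra k B} (E : RightDoubleExtension k A)

noncomputable def coord (b : B) : ℕ × ℕ →₀ A := (E.basis b).choose

lemma repr (b : B) :
    b = (E.coord b).sum fun n a => (a : B) * (E.y₁ ^ n.1 * E.y₂ ^ n.2) :=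
  (E.basis b).choose_spec.1

lemma coord_eq {b : B} {f : ℕ × ℕ →₀ A}
    (h : b = f.sum fun n a => (a : B) * (E.y₁ ^ n.1 * E.y₂ ^ n.2)) : E.coord b = f :=
  ((E.basis b).choose_spec.2 f h).symm

lemma coord_monomial (a : A) (p : ℕ × ℕ) :
    E.coord ((a : B) * (E.y₁ ^ p.1 * E.y₂ ^ p.2)) = Finsupp.single p a := by
  refine E.coord_eq ?_
  rw [Finsupp.sum_single_index]
  simp

lemma coord_zero : E.coord (0 : B) = 0 := by
  refine E.coord_eq ?_; simp

lemma coord_add (b c : B) : E.coord (b + c) = E.coord b + E.coord c := by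
  refine E.coord_eq ?_
  rw [Finsupp.sum_add_index' (by simp) (fun p a a' => by push_cast [add_mul]; try rfl)]
  exact congrArg₂ (· + ·) (E.repr b) (E.repr c)

lemma coord_ksmul (c : k) (b : B) : E.coord (c • b) = c • E.coord b := by
  refine E.coord_eq ?_
  conv_lhs => rw [E.repr b]
  rw [Finsupp.smul_sum, Finsupp.sum_smul_index' (by simp)]
  congr 1; funext p a
  rw [← smul_mul_assoc]
  norm_cast

lemma coord_sub (b c : B) : E.coord (b - c) = E.coord b - E.coord c := by
  have h := E.coord_add (b - c) c
  rw [sub_add_cancel] at h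
  rw [h]
  abel

lemma coord_amul (a : A) (b : B) : E.coord ((a : B) * b) = a • E.coord b := by
  refine E.coord_eq ?_
  conv_lhs => rw [E.repr b]
  rw [Finsupp.mul_sum, Finsupp.sum_smul_index' (by simp)]
  congr 1; funext p x
  rw [smul_eq_mul]; push_cast [mul_assoc]; try rfl


lemma coord_algebra (a : A) : E.coord (a : B) = Finsupp.single ((0,0) : ℕ × ℕ) a := by
  simpa using E.coord_monomial a (0, 0)

variable (ε : A →ₐ[k] k)

def Mk : Submodule k B where
  carrier := {b | ∀ q, E.coord b q ∈ RingHom.ker ε}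
  zero_mem' := by intro q; simp [coord_zero]
  add_mem' := by intro x y hx hy q; rw [E.coord_add]; exact add_mem (hx q) (hy q)
  smul_mem' := by
    intro c x hx q
    rw [E.coord_ksmul, Finsupp.smul_apply, RingHom.mem_ker, map_smul]
    have h := hx q
    rw [RingHom.mem_ker] at h
    rw [h, smul_zero]

lemma mem_Mk_iff {b : B} : b ∈ E.Mk ε ↔ ∀ q, E.coord b q ∈ RingHom.ker ε := Iff.rfl

lemma mem_Mk_coe {a : A} (ha : a ∈ RingHom.ker ε) : (a : B) ∈ E.Mk ε := by
  intro q
  rw [E.coord_algebra, Finsupp.single_apply]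
  split
  · exact ha
  · exact zero_mem _

lemma Mk_mul_right {b : B} (hb : b ∈ E.Mk ε) (c : B) : b * c ∈ E.Mk ε := by
  have hrepr : b * c
      = (E.coord b).sum fun p a => (a : B) * ((E.y₁ ^ p.1 * E.y₂ ^ p.2) * c) := by
    conv_lhs => rw [E.repr b]
    rw [Finsupp.sum_mul]
    congr 1; funext p a; rw [mul_assoc]
  rw [hrepr, Finsupp.sum]
  refine Submodule.sum_mem _ fun p hp => ?_
  intro q
  rw [E.coord_amul, Finsupp.smul_apply, smul_eq_mul, RingHom.mem_ker, map_mul]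
  have h := hb p
  rw [RingHom.mem_ker] at h
  rw [h, zero_mul]

lemma Mk_amul (a : A) {b : B} (hb : b ∈ E.Mk ε) : (a : B) * b ∈ E.Mk ε := by
  intro q
  rw [E.coord_amul, Finsupp.smul_apply, smul_eq_mul, RingHom.mem_ker, map_mul]
  have h := hb q
  rw [RingHom.mem_ker] at h
  rw [h, mul_zero]

variable (hσ : ∀ a ∈ RingHom.ker ε, E.σ₁₁ a ∈ RingHom.ker ε ∧ E.σ₁₂ a ∈ RingHom.ker ε ∧
        E.σ₂₁ a ∈ RingHom.ker ε ∧ E.σ₂₂ a ∈ RingHom.ker ε)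
    (hδ : ∀ a ∈ RingHom.ker ε, E.δ₁ a ∈ RingHom.ker ε ∧ E.δ₂ a ∈ RingHom.ker ε)

include hσ hδ in
lemma Mk_y1mul {b : B} (hb : b ∈ E.Mk ε) : E.y₁ * b ∈ E.Mk ε := by
  have hrepr : E.y₁ * b
      = (E.coord b).sum fun p a => (E.y₁ * (a : B)) * (E.y₁ ^ p.1 * E.y₂ ^ p.2) := by
    conv_lhs => rw [E.repr b]
    rw [Finsupp.mul_sum]
    congr 1; funext p a; rw [mul_assoc]
  rw [hrepr, Finsupp.sum]
  refine Submodule.sum_mem _ fun p hp => ?_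
  rw [E.R2₁, add_mul, add_mul]
  refine add_mem (add_mem ?_ ?_) ?_
  · rw [mul_assoc]
    exact E.Mk_mul_right ε (E.mem_Mk_coe ε (hσ _ (hb p)).1) _
  · rw [mul_assoc]
    exact E.Mk_mul_right ε (E.mem_Mk_coe ε (hσ _ (hb p)).2.1) _
  · exact E.Mk_mul_right ε (E.mem_Mk_coe ε (hδ _ (hb p)).1) _

include hσ hδ in
lemma Mk_y2mul {b : B} (hb : b ∈ E.Mk ε) : E.y₂ * b ∈ E.Mk ε := by
  have hrepr : E.y₂ * b
      = (E.coord b).sum fun p a => (E.y₂ * (a : B)) * (E.y₁ ^ p.1 * E.y₂ ^ p.2) := by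
    conv_lhs => rw [E.repr b]
    rw [Finsupp.mul_sum]
    congr 1; funext p a; rw [mul_assoc]
  rw [hrepr, Finsupp.sum]
  refine Submodule.sum_mem _ fun p hp => ?_
  rw [E.R2₂, add_mul, add_mul]
  refine add_mem (add_mem ?_ ?_) ?_
  · rw [mul_assoc]
    exact E.Mk_mul_right ε (E.mem_Mk_coe ε (hσ _ (hb p)).2.2.1) _
  · rw [mul_assoc]
    exact E.Mk_mul_right ε (E.mem_Mk_coe ε (hσ _ (hb p)).2.2.2) _
  · exact E.Mk_mul_right ε (E.mem_Mk_coe ε (hδ _ (hb p)).2) _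

include hσ hδ in
lemma Mk_y1pow_mul (n : ℕ) {b : B} (hb : b ∈ E.Mk ε) : E.y₁ ^ n * b ∈ E.Mk ε := by
  induction n with
  | zero => simpa using hb
  | succ n ih => rw [pow_succ', mul_assoc]; exact E.Mk_y1mul ε hσ hδ ih

include hσ hδ in
lemma Mk_y2pow_mul (n : ℕ) {b : B} (hb : b ∈ E.Mk ε) : E.y₂ ^ n * b ∈ E.Mk ε := by
  induction n with
  | zero => simpa using hb
  | succ n ih => rw [pow_succ', mul_assoc]; exact E.Mk_y2mul ε hσ hδ ih

include hσ hδ in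
lemma Mk_mul_left (c : B) {b : B} (hb : b ∈ E.Mk ε) : c * b ∈ E.Mk ε := by
  have hrepr : c * b
      = (E.coord c).sum fun p a => (a : B) * (E.y₁ ^ p.1 * (E.y₂ ^ p.2 * b)) := by
    conv_lhs => rw [E.repr c]
    rw [Finsupp.sum_mul]
    congr 1; funext p a; rw [mul_assoc, mul_assoc]
  rw [hrepr, Finsupp.sum]
  refine Submodule.sum_mem _ fun p hp => ?_
  exact E.Mk_amul ε _ (E.Mk_y1pow_mul ε hσ hδ _ (E.Mk_y2pow_mul ε hσ hδ _ hb))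

lemma mem_Mk_sub_eps (a : A) : (a : B) - algebraMap k B (ε a) ∈ E.Mk ε := by
  have h1 : (a : B) - algebraMap k B (ε a) = ((a - algebraMap k A (ε a) : A) : B) := by
    push_cast
    simp
  rw [h1]
  refine E.mem_Mk_coe ε ?_
  rw [RingHom.mem_ker, map_sub, AlgHom.commutes]
  simp


variable (hτ : E.τ₁ ∈ RingHom.ker ε ∧ E.τ₂ ∈ RingHom.ker ε ∧ E.τ₀ ∈ RingHom.ker ε)
    (hp : E.p₁₂ = 0)

include hτ hp in
lemma Mk_y2y1 : E.y₂ * E.y₁ - E.p₁₁ • (E.y₁ * E.y₁) ∈ E.Mk ε := by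
  rw [E.R1, hp, zero_smul, zero_add]
  have h : E.p₁₁ • (E.y₁ * E.y₁) + (E.τ₁ : B) * E.y₁ + (E.τ₂ : B) * E.y₂ + (E.τ₀ : B)
      - E.p₁₁ • (E.y₁ * E.y₁)
      = (E.τ₁ : B) * E.y₁ + ((E.τ₂ : B) * E.y₂ + (E.τ₀ : B)) := by abel
  rw [h]
  exact add_mem (E.Mk_mul_right ε (E.mem_Mk_coe ε hτ.1) _)
    (add_mem (E.Mk_mul_right ε (E.mem_Mk_coe ε hτ.2.1) _) (E.mem_Mk_coe ε hτ.2.2))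

include hσ hδ hτ hp in
lemma Mk_y2pow_y1 (d : ℕ) :
    E.y₂ ^ d * E.y₁ - E.p₁₁ ^ d • E.y₁ ^ (d + 1) ∈ E.Mk ε := by
  induction d with
  | zero => simp
  | succ d ih =>
    have h1 : E.y₂ * (E.y₂ ^ d * E.y₁) = E.y₂ ^ (d + 1) * E.y₁ := by
      rw [← mul_assoc, ← pow_succ']
    have h2 : E.y₂ * E.y₁ ^ (d + 1) = (E.y₂ * E.y₁) * E.y₁ ^ d := by
      rw [pow_succ', ← mul_assoc]
    have h3 : (E.y₁ * E.y₁) * E.y₁ ^ d = E.y₁ ^ (d + 2) := by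
      rw [mul_assoc, ← pow_succ', ← pow_succ']
    have h4 : E.p₁₁ ^ d * E.p₁₁ = E.p₁₁ ^ (d + 1) := (pow_succ _ _).symm
    have key : E.y₂ ^ (d + 1) * E.y₁ - E.p₁₁ ^ (d + 1) • E.y₁ ^ (d + 2)
        = E.y₂ * (E.y₂ ^ d * E.y₁ - E.p₁₁ ^ d • E.y₁ ^ (d + 1))
          + E.p₁₁ ^ d • ((E.y₂ * E.y₁ - E.p₁₁ • (E.y₁ * E.y₁)) * E.y₁ ^ d) := by
      simp only [mul_sub, smul_sub, mul_smul_comm, sub_mul, smul_mul_assoc, smul_smul,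
        h1, h2, h3, h4]
      abel
    rw [key]
    exact add_mem (E.Mk_y2mul ε hσ hδ ih)
      (Submodule.smul_mem _ _ (E.Mk_mul_right ε (E.Mk_y2y1 ε hτ hp) _))


def TL (n : ℕ) : Submodule k B :=
  Submodule.span k ({x | ∃ c i, i ≤ n ∧ x = E.y₁ ^ (c + 1) * E.y₂ ^ i} ∪ (E.Mk ε : Set B))

include hσ hδ hτ hp in
lemma mul_gen_mem_TL (n : ℕ) (b : B) (c i : ℕ) (hi : i ≤ n) :
    b * (E.y₁ ^ (c + 1) * E.y₂ ^ i) ∈ E.TL ε n := by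
  have hrepr : b * (E.y₁ ^ (c + 1) * E.y₂ ^ i)
      = (E.coord b).sum fun p a =>
        (a : B) * ((E.y₁ ^ p.1 * E.y₂ ^ p.2) * (E.y₁ ^ (c + 1) * E.y₂ ^ i)) := by
    conv_lhs => rw [E.repr b]
    rw [Finsupp.sum_mul]; congr 1; funext p a; rw [mul_assoc]
  rw [hrepr, Finsupp.sum]
  refine Submodule.sum_mem _ fun p hp' => ?_
  set a := E.coord b p with ha
  set w := E.y₂ ^ p.2 * E.y₁ - E.p₁₁ ^ p.2 • E.y₁ ^ (p.2 + 1) with hwdef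
  have hw : w ∈ E.Mk ε := E.Mk_y2pow_y1 ε hσ hδ hτ hp p.2
  have hsplit : (E.y₁ ^ p.1 * E.y₂ ^ p.2) * (E.y₁ ^ (c + 1) * E.y₂ ^ i)
      = E.p₁₁ ^ p.2 • (E.y₁ ^ (p.1 + (p.2 + 1) + c) * E.y₂ ^ i)
        + E.y₁ ^ p.1 * (w * (E.y₁ ^ c * E.y₂ ^ i)) := by
    have h5 : E.y₂ ^ p.2 * E.y₁ = E.p₁₁ ^ p.2 • E.y₁ ^ (p.2 + 1) + w := by
      rw [hwdef]; abel
    have h6 : (E.y₁ ^ p.1 * E.y₂ ^ p.2) * (E.y₁ ^ (c + 1) * E.y₂ ^ i)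
        = E.y₁ ^ p.1 * ((E.y₂ ^ p.2 * E.y₁) * (E.y₁ ^ c * E.y₂ ^ i)) := by
      have h7 : E.y₁ ^ (c + 1) = E.y₁ * E.y₁ ^ c := pow_succ' _ _
      rw [h7]
      simp only [mul_assoc]
    rw [h6, h5, add_mul, mul_add, smul_mul_assoc, mul_smul_comm]
    congr 2
    rw [← mul_assoc, ← mul_assoc, ← pow_add, ← pow_add]
  rw [hsplit, mul_add, mul_smul_comm]
  refine add_mem ?_ ?_
  · refine Submodule.smul_mem _ _ ?_
    set Y := E.y₁ ^ (p.1 + (p.2 + 1) + c) * E.y₂ ^ i with hY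
    have h7 : (a : B) * Y = ε a • Y + ((a : B) - algebraMap k B (ε a)) * Y := by
      rw [sub_mul, Algebra.smul_def]; abel
    rw [h7]
    refine add_mem (Submodule.smul_mem _ _ (Submodule.subset_span (Or.inl ?_)))
      (Submodule.subset_span (Or.inr (E.Mk_mul_right ε (E.mem_Mk_sub_eps ε a) Y)))
    exact ⟨p.1 + p.2 + c, i, hi, by rw [hY, show p.1 + (p.2 + 1) + c = p.1 + p.2 + c + 1 by omega]⟩
  · exact Submodule.subset_span (Or.inr
      (E.Mk_amul ε _ (E.Mk_y1pow_mul ε hσ hδ _ (E.Mk_mul_right ε hw _))))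

include hσ hδ hτ hp in
lemma mul_mem_TL (n : ℕ) (b : B) {x : B} (hx : x ∈ E.TL ε n) : b * x ∈ E.TL ε n := by
  induction hx using Submodule.span_induction with
  | mem x h =>
    rcases h with ⟨c, i, hi, rfl⟩ | h
    · exact E.mul_gen_mem_TL ε hσ hδ hτ hp n b c i hi
    · exact Submodule.subset_span (Or.inr (E.Mk_mul_left ε hσ hδ b h))
  | zero => rw [mul_zero]; exact zero_mem _
  | add x y hx hy ihx ihy => rw [mul_add]; exact add_mem ihx ihy
  | smul c x hx ih => rw [mul_smul_comm]; exact Submodule.smul_mem _ _ ih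

lemma TL_apply (n : ℕ) {x : B} (hx : x ∈ E.TL ε n) : ε (E.coord x (1, n + 1)) = 0 := by
  induction hx using Submodule.span_induction with
  | mem x h =>
    rcases h with ⟨c, i, hi, rfl⟩ | h
    · have h1 : E.coord (E.y₁ ^ (c + 1) * E.y₂ ^ i)
          = Finsupp.single ((c + 1, i) : ℕ × ℕ) 1 := by
        simpa using E.coord_monomial 1 (c + 1, i)
      rw [h1, Finsupp.single_apply, if_neg (by simp; omega)]
      simp
    · have h2 := h (1, n + 1)
      rwa [RingHom.mem_ker] at h2
  | zero => simp [coord_zero]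
  | add x y hx hy ihx ihy => rw [E.coord_add]; simp [ihx, ihy]
  | smul c x hx ih => rw [E.coord_ksmul]; simp [ih]


def z : B := E.y₂ - E.p₁₁ • E.y₁

include hσ hδ in
lemma Mk_zmul {b : B} (hb : b ∈ E.Mk ε) : E.z * b ∈ E.Mk ε := by
  rw [z, sub_mul, smul_mul_assoc]
  exact sub_mem (E.Mk_y2mul ε hσ hδ hb) (Submodule.smul_mem _ _ (E.Mk_y1mul ε hσ hδ hb))

include hσ hδ in
lemma z_mul_coe (a : A) : E.z * (a : B) - ε a • E.z ∈ E.Mk ε := by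
  have h1 : E.z * (a : B) - ε a • E.z = E.z * ((a : B) - algebraMap k B (ε a)) := by
    rw [mul_sub]
    congr 1
    rw [← Algebra.commutes, ← Algebra.smul_def]
  rw [h1]
  exact E.Mk_zmul ε hσ hδ (E.mem_Mk_sub_eps ε a)

include hτ hp in
lemma Mk_z_y1 : E.z * E.y₁ ∈ E.Mk ε := by
  have h1 : E.z * E.y₁ = E.y₂ * E.y₁ - E.p₁₁ • (E.y₁ * E.y₁) := by
    rw [z, sub_mul, smul_mul_assoc]
  rw [h1]
  exact E.Mk_y2y1 ε hτ hp

def ZS : Submodule k B :=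
  Submodule.span k ({x | ∃ t, x = E.z * E.y₂ ^ t} ∪ (E.Mk ε : Set B))

include hσ hδ hτ hp in
lemma z_mul_mem_ZS (b : B) : E.z * b ∈ E.ZS ε := by
  have hrepr : E.z * b
      = (E.coord b).sum fun p a => (E.z * (a : B)) * (E.y₁ ^ p.1 * E.y₂ ^ p.2) := by
    conv_lhs => rw [E.repr b]
    rw [Finsupp.mul_sum]; congr 1; funext p a; rw [mul_assoc]
  rw [hrepr, Finsupp.sum]
  refine Submodule.sum_mem _ fun p hp' => ?_
  set a := E.coord b p with ha
  set u := E.z * (a : B) - ε a • E.z with hu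
  have hu2 : u ∈ E.Mk ε := E.z_mul_coe ε hσ hδ a
  have h2 : (E.z * (a : B)) * (E.y₁ ^ p.1 * E.y₂ ^ p.2)
      = ε a • (E.z * (E.y₁ ^ p.1 * E.y₂ ^ p.2)) + u * (E.y₁ ^ p.1 * E.y₂ ^ p.2) := by
    rw [hu, sub_mul, smul_mul_assoc]
    abel
  rw [h2]
  refine add_mem (Submodule.smul_mem _ _ ?_)
    (Submodule.subset_span (Or.inr (E.Mk_mul_right ε hu2 _)))
  rcases hc : p.1 with _ | c
  · refine Submodule.subset_span (Or.inl ⟨p.2, ?_⟩)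
    simp
  · have h3 : E.z * (E.y₁ ^ (c + 1) * E.y₂ ^ p.2)
        = (E.z * E.y₁) * (E.y₁ ^ c * E.y₂ ^ p.2) := by
      rw [pow_succ']
      simp only [mul_assoc]
    rw [h3]
    exact Submodule.subset_span (Or.inr
      (E.Mk_mul_right ε (E.Mk_z_y1 ε hτ hp) _))

def TR (n : ℕ) : Submodule k B :=
  Submodule.span k
    ({x | ∃ j d, j ≤ n ∧ x = E.y₁ ^ j * (E.z * E.y₂ ^ d)} ∪ (E.Mk ε : Set B))

include hσ hδ in
lemma y1pow_mul_ZS_mem_TR (n j : ℕ) (hj : j ≤ n) {u : B} (hu : u ∈ E.ZS ε) :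
    E.y₁ ^ j * u ∈ E.TR ε n := by
  induction hu using Submodule.span_induction with
  | mem x h =>
    rcases h with ⟨t, rfl⟩ | h
    · exact Submodule.subset_span (Or.inl ⟨j, t, hj, rfl⟩)
    · exact Submodule.subset_span (Or.inr (E.Mk_y1pow_mul ε hσ hδ _ h))
  | zero => rw [mul_zero]; exact zero_mem _
  | add x y hx hy ihx ihy => rw [mul_add]; exact add_mem ihx ihy
  | smul c x hx ih => rw [mul_smul_comm]; exact Submodule.smul_mem _ _ ih

include hσ hδ hτ hp in
lemma TR_mul (n : ℕ) {x : B} (hx : x ∈ E.TR ε n) (b : B) : x * b ∈ E.TR ε n := by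
  induction hx using Submodule.span_induction with
  | mem x h =>
    rcases h with ⟨j, d, hj, rfl⟩ | h
    · have h1 : (E.y₁ ^ j * (E.z * E.y₂ ^ d)) * b = E.y₁ ^ j * (E.z * (E.y₂ ^ d * b)) := by
        simp only [mul_assoc]
      rw [h1]
      exact E.y1pow_mul_ZS_mem_TR ε hσ hδ n j hj (E.z_mul_mem_ZS ε hσ hδ hτ hp _)
    · exact Submodule.subset_span (Or.inr (E.Mk_mul_right ε h b))
  | zero => rw [zero_mul]; exact zero_mem _
  | add x y hx hy ihx ihy => rw [add_mul]; exact add_mem ihx ihy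
  | smul c x hx ih => rw [smul_mul_assoc]; exact Submodule.smul_mem _ _ ih

lemma coord_gen_TR (j d : ℕ) :
    E.coord (E.y₁ ^ j * (E.z * E.y₂ ^ d))
      = Finsupp.single ((j, d + 1) : ℕ × ℕ) 1 - E.p₁₁ • Finsupp.single ((j + 1, d) : ℕ × ℕ) 1 := by
  have hz : E.z * E.y₂ ^ d = E.y₂ ^ (d + 1) - E.p₁₁ • (E.y₁ * E.y₂ ^ d) := by
    rw [z, sub_mul, smul_mul_assoc, ← pow_succ']
  have h1 : E.y₁ ^ j * (E.z * E.y₂ ^ d)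
      = E.y₁ ^ j * E.y₂ ^ (d + 1) - E.p₁₁ • (E.y₁ ^ (j + 1) * E.y₂ ^ d) := by
    rw [hz, mul_sub, mul_smul_comm, ← mul_assoc, ← pow_succ]
  rw [h1, E.coord_sub, E.coord_ksmul]
  congr 1
  · simpa using E.coord_monomial 1 (j, d + 1)
  · congr 1
    simpa using E.coord_monomial 1 (j + 1, d)

lemma TR_apply (n : ℕ) (q : ℕ × ℕ)
    (hq : ∀ j d : ℕ, j ≤ n →
      ε (((Finsupp.single ((j, d + 1) : ℕ × ℕ) (1 : A)
          - E.p₁₁ • Finsupp.single ((j + 1, d) : ℕ × ℕ) 1 : ℕ × ℕ →₀ A)) q) = 0)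
    {x : B} (hx : x ∈ E.TR ε n) : ε (E.coord x q) = 0 := by
  induction hx using Submodule.span_induction with
  | mem x h =>
    rcases h with ⟨j, d, hj, rfl⟩ | h
    · rw [E.coord_gen_TR]
      exact hq j d hj
    · have h2 := h q
      rwa [RingHom.mem_ker] at h2
  | zero => simp [coord_zero]
  | add x y hx hy ihx ihy => rw [E.coord_add]; simp [ihx, ihy]
  | smul c x hx ih => rw [E.coord_ksmul]; simp [ih]

end RightDoubleExtension

/-- If a right double extension `B` admits a `σ`-, `δ`-stable codimension-1 ideal
`m = ker ε` of `A` containing the tail `τ`, and `B` is left or right noetherian,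
then `p₁₂ ≠ 0`. -/
theorem p12_ne_zero_of_noetherian
    {k : Type*} [Field k] {B : Type*} [Ring B] [Algebra k B]
    {A : Subalgebra k B} (E : RightDoubleExtension k A)
    (ε : A →ₐ[k] k)
    (hσ : ∀ a ∈ RingHom.ker ε, E.σ₁₁ a ∈ RingHom.ker ε ∧ E.σ₁₂ a ∈ RingHom.ker ε ∧
        E.σ₂₁ a ∈ RingHom.ker ε ∧ E.σ₂₂ a ∈ RingHom.ker ε)
    (hδ : ∀ a ∈ RingHom.ker ε, E.δ₁ a ∈ RingHom.ker ε ∧ E.δ₂ a ∈ RingHom.ker ε)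
    (hτ : E.τ₁ ∈ RingHom.ker ε ∧ E.τ₂ ∈ RingHom.ker ε ∧ E.τ₀ ∈ RingHom.ker ε)
    (hnoeth : IsNoetherianRing B ∨ IsNoetherianRing Bᵐᵒᵖ) :
    E.p₁₂ ≠ 0 := by
  intro hp
  rcases hnoeth with hN | hN
  · -- left noetherian case
    set f : ℕ → Submodule B B :=
      fun n => Submodule.span B {x | ∃ j ≤ n, x = E.y₁ * E.y₂ ^ j} with hf
    have hmono : Monotone f := by
      intro n m hnm
      apply Submodule.span_mono
      rintro x ⟨j, hj, rfl⟩
      exact ⟨j, hj.trans hnm, rfl⟩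
    obtain ⟨n, hn⟩ := monotone_stabilizes_iff_noetherian.mpr hN ⟨f, hmono⟩
    have h2 : f n = f (n + 1) := hn (n + 1) (Nat.le_succ n)
    have h1 : E.y₁ * E.y₂ ^ (n + 1) ∈ f (n + 1) :=
      Submodule.subset_span ⟨n + 1, le_refl _, rfl⟩
    rw [← h2] at h1
    have hsub : ∀ x ∈ f n, x ∈ E.TL ε n := by
      intro x hx
      induction hx using Submodule.span_induction with
      | mem x h =>
        obtain ⟨j, hj, rfl⟩ := h
        exact Submodule.subset_span (Or.inl ⟨0, j, hj, by simp⟩)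
      | zero => exact zero_mem _
      | add x y hx hy ihx ihy => exact add_mem ihx ihy
      | smul b x hx ih =>
        rw [smul_eq_mul]
        exact E.mul_mem_TL ε hσ hδ hτ hp n b ih
    have hTL := hsub _ h1
    have h0 := E.TL_apply ε n hTL
    have h3 : E.coord (E.y₁ * E.y₂ ^ (n + 1))
        = Finsupp.single ((1, n + 1) : ℕ × ℕ) 1 := by
      simpa using E.coord_monomial 1 (1, n + 1)
    rw [h3, Finsupp.single_eq_same, map_one] at h0
    exact one_ne_zero h0
  · -- right noetherian case
    set f : ℕ → Submodule Bᵐᵒᵖ Bᵐᵒᵖ :=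
      fun n => Submodule.span Bᵐᵒᵖ
        {w | ∃ j ≤ n, w = MulOpposite.op (E.y₁ ^ j * E.z)} with hf
    have hmono : Monotone f := by
      intro n m hnm
      apply Submodule.span_mono
      rintro x ⟨j, hj, rfl⟩
      exact ⟨j, hj.trans hnm, rfl⟩
    obtain ⟨n, hn⟩ := monotone_stabilizes_iff_noetherian.mpr hN ⟨f, hmono⟩
    have h2 : f n = f (n + 1) := hn (n + 1) (Nat.le_succ n)
    have h1 : MulOpposite.op (E.y₁ ^ (n + 1) * E.z) ∈ f (n + 1) :=
      Submodule.subset_span ⟨n + 1, le_refl _, rfl⟩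
    rw [← h2] at h1
    have hsub : ∀ w ∈ f n, MulOpposite.unop w ∈ E.TR ε n := by
      intro w hw
      induction hw using Submodule.span_induction with
        | mem x h =>
          obtain ⟨j, hj, rfl⟩ := h
          rw [MulOpposite.unop_op]
          exact Submodule.subset_span (Or.inl ⟨j, 0, hj, by simp⟩)
        | zero => exact zero_mem _
        | add x y hx hy ihx ihy => rw [MulOpposite.unop_add]; exact add_mem ihx ihy
        | smul r x hx ih =>
          rw [smul_eq_mul, MulOpposite.unop_mul]
          exact E.TR_mul ε hσ hδ hτ hp n ih _
    have hTR : E.y₁ ^ (n + 1) * E.z ∈ E.TR ε n := by simpa using hsub _ h1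
    have hzz : E.y₁ ^ (n + 1) * E.z = E.y₁ ^ (n + 1) * (E.z * E.y₂ ^ 0) := by simp
    by_cases hp11 : E.p₁₁ = 0
    · have h0 := E.TR_apply ε n (n + 1, 1) ?_ hTR
      · rw [hzz, E.coord_gen_TR] at h0
        simp [hp11, Finsupp.sub_apply, Finsupp.smul_apply, Finsupp.single_apply] at h0
      · intro j d hj
        have hne : ((j, d + 1) : ℕ × ℕ) ≠ (n + 1, 1) := by
          intro hcon
          have h := congrArg Prod.fst hcon
          simp at h; omega
        simp [hp11, Finsupp.sub_apply, Finsupp.smul_apply, Finsupp.single_apply, hne]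
    · have h0 := E.TR_apply ε n (n + 2, 0) ?_ hTR
      · rw [hzz, E.coord_gen_TR] at h0
        have hne : ((n + 1, 0 + 1) : ℕ × ℕ) ≠ (n + 2, 0) := by simp
        simp [Finsupp.sub_apply, Finsupp.smul_apply, Finsupp.single_apply, hne] at h0
        exact hp11 h0
      · intro j d hj
        have hne1 : ((j, d + 1) : ℕ × ℕ) ≠ (n + 2, 0) := by simp
        have hne2 : ((j + 1, d) : ℕ × ℕ) ≠ (n + 2, 0) := by
          intro hcon
          have h := congrArg Prod.fst hcon
          simp at h; omega
        simp [Finsupp.sub_apply, Finsupp.smul_apply, Finsupp.single_apply, hne1, hne2]
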